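/- For any integer k and integer n \ge 1, (n+1) B_n^{(k)}(x) - n(x + 1/2) B_{n-1}^{(k)}(x) + \sum_{l=0}^{n-2} \binom{n}{l} B_{n-l} B_l^{(k)}(x) = \sum_{l=0}^{n} \binom{n}{l} B_{n-l} B_l^{(k-1)}(x). -/

import Mathlib

open PowerSeries Finset Nat

/-- The formal power series `e^{-t}`. -/
noncomputable def expNeg : PowerSeries ℂ := PowerSeries.rescale (-1) (PowerSeries.exp ℂ)

/-- The generating function `Li_k(1-e^{-t})/(1-e^{-t}) = ∑_{m≥0} (1-e^{-t})^m/(m+1)^k`,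
given coefficientwise (the sum truncates since `(1-e^{-t})^m` has order `≥ m`). -/
noncomputable def polyBernoulliGF (k : ℤ) : PowerSeries ℂ :=
  PowerSeries.mk fun n => ∑ m ∈ Finset.range (n + 1),
    (((m : ℂ) + 1) ^ k)⁻¹ * PowerSeries.coeff n ((1 - expNeg) ^ m)

/-- The poly-Bernoulli polynomial `B_n^{(k)}(x)`, defined by
`Li_k(1-e^{-t})/(1-e^{-t}) · e^{xt} = ∑ B_n^{(k)}(x) tⁿ/n!`. -/
noncomputable def polyBernoulli (k : ℤ) (n : ℕ) (x : ℂ) : ℂ :=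
  (n ! : ℂ) * PowerSeries.coeff n
    (polyBernoulliGF k * PowerSeries.mk fun j => x ^ j / (j ! : ℂ))

/-- Stirling numbers of the second kind, via `(e^t-1)^m = m! ∑_{l} S₂(l,m) t^l/l!`. -/
noncomputable def stirling2 (l m : ℕ) : ℂ :=
  (l ! : ℂ) / (m ! : ℂ) * PowerSeries.coeff l ((PowerSeries.exp ℂ - 1) ^ m)

/-! ### Auxiliary machinery -/

/-- The series `e^{xt}`. -/
noncomputable def Eser (x : ℂ) : PowerSeries ℂ := PowerSeries.mk fun j => x ^ j / (j ! : ℂ)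

lemma exp_mul_expNeg : PowerSeries.exp ℂ * expNeg = 1 :=
  PowerSeries.exp_mul_exp_neg_eq_one

lemma coeff_expNeg (n : ℕ) :
    PowerSeries.coeff n expNeg = (-1) ^ n * ((1 : ℂ) / n !) := by
  simp [expNeg, PowerSeries.coeff_rescale, PowerSeries.coeff_exp]

lemma deriv_expNeg : d⁄dX ℂ expNeg = - expNeg := by
  ext n
  rw [PowerSeries.coeff_derivative, map_neg, coeff_expNeg, coeff_expNeg]
  have h1 : ((n ! : ℂ)) ≠ 0 := Nat.cast_ne_zero.mpr n.factorial_ne_zero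
  have h2 : ((n : ℂ) + 1) ≠ 0 := by
    exact_mod_cast n.succ_ne_zero
  push_cast [Nat.factorial_succ]
  field_simp
  ring

/-- `z = 1 - e^{-t}`. -/
noncomputable def zz : PowerSeries ℂ := 1 - expNeg

lemma constCoeff_zz : PowerSeries.constantCoeff zz = 0 := by
  have h : PowerSeries.constantCoeff expNeg = 1 := by
    rw [← PowerSeries.coeff_zero_eq_constantCoeff_apply, coeff_expNeg]
    simp
  simp [zz, h]

lemma coeff_zz_pow {n m : ℕ} (h : n < m) : PowerSeries.coeff n (zz ^ m) = 0 := by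
  have hdvd : (PowerSeries.X : PowerSeries ℂ) ^ m ∣ zz ^ m :=
    pow_dvd_pow_of_dvd (PowerSeries.X_dvd_iff.mpr constCoeff_zz) m
  exact (PowerSeries.X_pow_dvd_iff.mp hdvd) n h

lemma deriv_zz : d⁄dX ℂ zz = 1 - zz := by
  simp [zz, map_sub, deriv_expNeg]

lemma exp_sub_one_mul : (PowerSeries.exp ℂ - 1) * (1 - zz) = zz := by
  have h : (1 : PowerSeries ℂ) - zz = expNeg := by simp [zz]
  rw [h, sub_mul, exp_mul_expNeg, one_mul]
  rfl

lemma exp_sub_one_mul_pow (j : ℕ) :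
    (PowerSeries.exp ℂ - 1) * (zz ^ j * (1 - zz)) = zz ^ (j + 1) := by
  rw [mul_comm (zz ^ j), ← mul_assoc, exp_sub_one_mul, mul_comm, pow_succ]

/-- Truncated version of the generating function. -/
noncomputable def tr (k : ℤ) (M : ℕ) : PowerSeries ℂ :=
  ∑ m ∈ Finset.range M, PowerSeries.C (((m : ℂ) + 1) ^ k)⁻¹ * zz ^ m

lemma coeff_GF (k : ℤ) {n M : ℕ} (h : n < M) :
    PowerSeries.coeff n (polyBernoulliGF k) = PowerSeries.coeff n (tr k M) := by
  rw [tr, map_sum, polyBernoulliGF, PowerSeries.coeff_mk]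
  simp only [PowerSeries.coeff_C_mul]
  refine Finset.sum_subset (Finset.range_subset_range.mpr h) ?_
  intro m _ hnm
  have hn : n < m := by
    simp only [Finset.mem_range, not_lt] at hnm
    omega
  rw [show ((1 : PowerSeries ℂ) - expNeg) = zz from rfl, coeff_zz_pow hn, mul_zero]

lemma cscal (k : ℤ) (m : ℕ) :
    (((m : ℂ) + 1) ^ (k - 1))⁻¹ - (((m : ℂ) + 1) ^ k)⁻¹
      = (m : ℂ) * (((m : ℂ) + 1) ^ k)⁻¹ := by
  have hm : ((m : ℂ) + 1) ≠ 0 := by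
    exact_mod_cast m.succ_ne_zero
  have hk : ((m : ℂ) + 1) ^ k = ((m : ℂ) + 1) ^ (k - 1) * ((m : ℂ) + 1) := by
    rw [← zpow_add_one₀ hm, sub_add_cancel]
  have h1 : (((m : ℂ) + 1) ^ (k - 1)) ≠ 0 := zpow_ne_zero _ hm
  rw [hk, mul_inv]
  field_simp
  ring

/-- The finite-sum version of the key differential identity. -/
lemma key_tr (k : ℤ) (M : ℕ) :
    (PowerSeries.exp ℂ - 1) * d⁄dX ℂ (tr k M) = tr (k - 1) M - tr k M := by
  rw [show tr (k-1) M - tr k M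
      = ∑ m ∈ Finset.range M,
          (PowerSeries.C ((((m : ℂ) + 1) ^ (k-1))⁻¹ - (((m : ℂ) + 1) ^ k)⁻¹)) * zz ^ m by
    simp [tr, map_sub, sub_mul, Finset.sum_sub_distrib]]
  rw [tr, map_sum, Finset.mul_sum]
  refine Finset.sum_congr rfl fun m _ => ?_
  rw [cscal]
  have hD : d⁄dX ℂ (PowerSeries.C (((m : ℂ) + 1) ^ k)⁻¹ * zz ^ m)
      = m • (PowerSeries.C (((m : ℂ) + 1) ^ k)⁻¹ * (zz ^ (m - 1) * (1 - zz))) := by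
    rw [Derivation.leibniz, Derivation.leibniz_pow, deriv_zz, PowerSeries.derivative_C]
    simp only [smul_eq_mul, smul_zero, mul_zero, add_zero, smul_mul_assoc, mul_smul_comm]
  rw [hD]
  cases m with
  | zero => simp
  | succ j =>
    simp only [Nat.succ_sub_one, nsmul_eq_mul, map_mul, map_natCast]
    push_cast
    linear_combination
      (((j : ℂ⟦X⟧) + 1) * PowerSeries.C ((((j:ℕ) : ℂ) + 1 + 1) ^ k)⁻¹) *
        exp_sub_one_mul_pow j

/-- The key differential identity for the full generating function. -/
lemma key (k : ℤ) :
    (PowerSeries.exp ℂ - 1) * d⁄dX ℂ (polyBernoulliGF k)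
      = polyBernoulliGF (k - 1) - polyBernoulliGF k := by
  ext n
  have hdG : PowerSeries.coeff n ((PowerSeries.exp ℂ - 1) * d⁄dX ℂ (polyBernoulliGF k))
      = PowerSeries.coeff n ((PowerSeries.exp ℂ - 1) * d⁄dX ℂ (tr k (n + 2))) := by
    have hdvd : (PowerSeries.X : PowerSeries ℂ) ^ (n+1)
        ∣ (d⁄dX ℂ (polyBernoulliGF k) - d⁄dX ℂ (tr k (n + 2))) := by
      rw [PowerSeries.X_pow_dvd_iff]
      intro j hj
      rw [map_sub, PowerSeries.coeff_derivative, PowerSeries.coeff_derivative,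
        coeff_GF k (show j + 1 < n + 2 by omega), sub_self]
    have h0 : PowerSeries.coeff n
        ((PowerSeries.exp ℂ - 1) * (d⁄dX ℂ (polyBernoulliGF k) - d⁄dX ℂ (tr k (n + 2)))) = 0 :=
      (PowerSeries.X_pow_dvd_iff.mp (hdvd.mul_left _)) n (by omega)
    rw [mul_sub, map_sub, sub_eq_zero] at h0
    exact h0
  rw [hdG, key_tr, map_sub, map_sub,
    coeff_GF (k-1) (show n < n + 2 by omega), coeff_GF k (show n < n + 2 by omega)]

lemma key2 (k : ℤ) :
    (PowerSeries.X : PowerSeries ℂ) * d⁄dX ℂ (polyBernoulliGF k)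
        + bernoulliPowerSeries ℂ * polyBernoulliGF k
      = bernoulliPowerSeries ℂ * polyBernoulliGF (k - 1) := by
  have h := congrArg (fun f => bernoulliPowerSeries ℂ * f) (key k)
  rw [← mul_assoc, bernoulliPowerSeries_mul_exp_sub_one, mul_sub] at h
  linear_combination h

lemma deriv_Eser (x : ℂ) : d⁄dX ℂ (Eser x) = PowerSeries.C x * Eser x := by
  ext n
  rw [PowerSeries.coeff_derivative, PowerSeries.coeff_C_mul]
  simp only [Eser, PowerSeries.coeff_mk]
  have h1 : ((n ! : ℂ)) ≠ 0 := Nat.cast_ne_zero.mpr n.factorial_ne_zero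
  have h2 : ((n : ℂ) + 1) ≠ 0 := by
    exact_mod_cast n.succ_ne_zero
  rw [Nat.factorial_succ]
  push_cast
  field_simp
  ring

theorem polyBernoulli_corollary (k : ℤ) (n : ℕ) (hn : 1 ≤ n) (x : ℂ) :
    ((n : ℂ) + 1) * polyBernoulli k n x - (n : ℂ) * (x + 1 / 2) * polyBernoulli k (n - 1) x +
        ∑ l ∈ Finset.range (n - 1), (n.choose l : ℂ) * (bernoulli (n - l) : ℂ) *
          polyBernoulli k l x =
      ∑ l ∈ Finset.range (n + 1), (n.choose l : ℂ) * (bernoulli (n - l) : ℂ) *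
        polyBernoulli (k - 1) l x := by
  obtain ⟨m, rfl⟩ : ∃ m, n = m + 1 := ⟨n - 1, (Nat.succ_pred_eq_of_pos hn).symm⟩
  simp only [polyBernoulli, Nat.add_sub_cancel,
    show (PowerSeries.mk fun j => x ^ j / (j ! : ℂ)) = Eser x from rfl]
  set F : PowerSeries ℂ := polyBernoulliGF k * Eser x with hF
  set G : PowerSeries ℂ := polyBernoulliGF (k - 1) * Eser x with hG
  -- main power series identity multiplied by `e^{xt}`
  have hmain : (PowerSeries.X : PowerSeries ℂ) * d⁄dX ℂ (polyBernoulliGF k) * Eser x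
        + bernoulliPowerSeries ℂ * F
      = bernoulliPowerSeries ℂ * G := by
    have h := congrArg (fun f => f * Eser x) (key2 k)
    simp only [add_mul] at h
    rw [hF, hG]
    linear_combination h
  have hc := congrArg (PowerSeries.coeff (m + 1)) hmain
  rw [map_add] at hc
  -- the first term
  have hterm1 : PowerSeries.coeff (m + 1)
        ((PowerSeries.X : PowerSeries ℂ) * d⁄dX ℂ (polyBernoulliGF k) * Eser x)
      = ((m : ℂ) + 1) * PowerSeries.coeff (m + 1) F - x * PowerSeries.coeff m F := by
    have hprod : d⁄dX ℂ (polyBernoulliGF k) * Eser x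
        = d⁄dX ℂ F - PowerSeries.C x * F := by
      rw [hF, Derivation.leibniz, deriv_Eser]
      simp only [smul_eq_mul]
      ring
    rw [mul_assoc, PowerSeries.coeff_succ_X_mul, hprod, map_sub,
      PowerSeries.coeff_derivative, PowerSeries.coeff_C_mul]
    ring
  -- convolution with the Bernoulli power series
  have hconv : ∀ H : PowerSeries ℂ, PowerSeries.coeff (m + 1) (bernoulliPowerSeries ℂ * H)
      = ∑ l ∈ Finset.range (m + 1 + 1), PowerSeries.coeff l H *
          (algebraMap ℚ ℂ) (bernoulli (m + 1 - l) / (m + 1 - l)!) := by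
    intro H
    rw [mul_comm, PowerSeries.coeff_mul,
      Finset.Nat.sum_antidiagonal_eq_sum_range_succ
        (fun i j => PowerSeries.coeff i H * PowerSeries.coeff j (bernoulliPowerSeries ℂ))]
    refine Finset.sum_congr rfl fun l _ => ?_
    rw [bernoulliPowerSeries, PowerSeries.coeff_mk]
  rw [hterm1, hconv F, hconv G] at hc
  -- relating binomial-sum terms to convolution terms
  have hfac : ∀ (l : ℕ) (c : ℂ), l ≤ m + 1 →
      ((m + 1).choose l : ℂ) * (bernoulli (m + 1 - l) : ℂ) * ((l ! : ℂ) * c)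
        = (((m + 1)! : ℕ) : ℂ) *
            (c * (algebraMap ℚ ℂ) (bernoulli (m + 1 - l) / (m + 1 - l)!)) := by
    intro l c hl
    have h := Nat.choose_mul_factorial_mul_factorial hl
    have hcast : (((m + 1).choose l : ℂ)) * (l ! : ℂ) * (((m + 1) - l)! : ℂ)
        = (((m + 1)! : ℕ) : ℂ) := by
      exact_mod_cast congrArg (Nat.cast : ℕ → ℂ) h
    have hne : (((m + 1 - l)! : ℂ)) ≠ 0 := Nat.cast_ne_zero.mpr (Nat.factorial_ne_zero _)
    rw [eq_ratCast]
    push_cast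
    rw [← hcast]
    field_simp
  have hsum : ∀ H : PowerSeries ℂ,
      ∑ l ∈ Finset.range (m + 1 + 1), ((m + 1).choose l : ℂ) * (bernoulli (m + 1 - l) : ℂ) *
          ((l ! : ℂ) * PowerSeries.coeff l H)
        = (((m + 1)! : ℕ) : ℂ) * ∑ l ∈ Finset.range (m + 1 + 1), PowerSeries.coeff l H *
            (algebraMap ℚ ℂ) (bernoulli (m + 1 - l) / (m + 1 - l)!) := by
    intro H
    rw [Finset.mul_sum]
    refine Finset.sum_congr rfl fun l hl => ?_
    exact hfac l _ (by simp only [Finset.mem_range] at hl; omega)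
  -- split off the last two terms of the binomial sum for `F`
  have hsplit : ∑ l ∈ Finset.range (m + 1 + 1), ((m + 1).choose l : ℂ) *
        (bernoulli (m + 1 - l) : ℂ) * ((l ! : ℂ) * PowerSeries.coeff l F)
      = (∑ l ∈ Finset.range m, ((m + 1).choose l : ℂ) *
          (bernoulli (m + 1 - l) : ℂ) * ((l ! : ℂ) * PowerSeries.coeff l F))
        + ((m : ℂ) + 1) * (-(1 / 2) : ℂ) * ((m ! : ℂ) * PowerSeries.coeff m F)
        + (((m + 1)! : ℕ) : ℂ) * PowerSeries.coeff (m + 1) F := by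
    rw [Finset.sum_range_succ, Finset.sum_range_succ]
    have e1 : m + 1 - m = 1 := by omega
    have e2 : m + 1 - (m + 1) = 0 := by omega
    rw [e1, e2, bernoulli_one, bernoulli_zero, Nat.choose_succ_self_right, Nat.choose_self]
    push_cast
    ring
  -- final assembly
  have hsF := hsum F
  have hsG := hsum G
  push_cast [Nat.factorial_succ] at hc hsF hsG hsplit ⊢
  linear_combination ((m : ℂ) + 1) * (m ! : ℂ) * hc - hsplit + hsF - hsG
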